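/- Let F : ℝ → [0,∞) be a continuous function satisfying F(t) ≤ F(s) − 2λ' ∫_s^t F(σ)^{r/2} dσ for all s ≤ t, where λ' > 0 and r > 2. Then for all t ≥ s, F(t) ≤ min( F(s), (λ'(r−2)(t−s))^{−2/(r−2)} ). -/

import Mathlib

open intervalIntegral

/-- Comparison-theorem estimate: if `F` is continuous, nonnegative, and satisfies
`F(t) ≤ F(s) − 2λ' ∫_s^t F(σ)^{r/2} dσ` for all `s ≤ t` (with `λ' > 0`, `r > 2`),
then `F(t) ≤ min(F(s), (λ'(r−2)(t−s))^{−2/(r−2)})` for `t ≥ s` (the second bound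
being interpreted for `t > s`). -/
theorem polynomial_decay_comparison (F : ℝ → ℝ) (hFc : Continuous F)
    (hFnn : ∀ t, 0 ≤ F t) (lam' r : ℝ) (hlam' : 0 < lam') (hr : 2 < r)
    (hF : ∀ s t : ℝ, s ≤ t → F t ≤ F s - 2 * lam' * ∫ σ in s..t, (F σ) ^ (r / 2)) :
    ∀ s t : ℝ, s ≤ t →
      F t ≤ F s ∧ (s < t → F t ≤ (lam' * (r - 2) * (t - s)) ^ (-(2 / (r - 2)))) := by
  have hr2 : (0:ℝ) < r - 2 := by linarith
  have hp1 : (1:ℝ) ≤ r / 2 := by linarith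
  have hPc : Continuous fun σ => F σ ^ (r / 2) :=
    hFc.rpow_const fun x => Or.inr (by linarith)
  have hmono : ∀ s t : ℝ, s ≤ t → F t ≤ F s := by
    intro s t hst
    have hint : 0 ≤ ∫ σ in s..t, F σ ^ (r / 2) :=
      intervalIntegral.integral_nonneg hst fun σ _ => Real.rpow_nonneg (hFnn σ) _
    have h := hF s t hst
    nlinarith
  intro s t hst
  refine ⟨hmono s t hst, fun hlt => ?_⟩
  have hts : 0 < t - s := by linarith
  have hbase : 0 < lam' * (r - 2) * (t - s) := by positivity
  rcases eq_or_lt_of_le (hFnn s) with h0 | hFs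
  · have hFt0 : F t = 0 := le_antisymm (by rw [h0]; exact hmono s t hst) (hFnn t)
    rw [hFt0]
    exact (Real.rpow_pos_of_pos hbase _).le
  -- main case : F s > 0
  set c : ℝ := lam' * (r - 2) with hc
  set m : ℝ := 2 / (r - 2) with hm
  have hcpos : 0 < c := by positivity
  have hmpos : 0 < m := by positivity
  have hcm : c * m = 2 * lam' := by rw [hc, hm]; field_simp
  set ε : ℝ := F s ^ (-((r - 2) / 2)) with hε
  have hεpos : 0 < ε := Real.rpow_pos_of_pos hFs _
  have hεs : ε ^ (-m) = F s := by
    rw [hε, ← Real.rpow_mul hFs.le,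
      show -((r - 2) / 2) * -m = 1 by rw [hm]; field_simp, Real.rpow_one]
  -- the slope upper bound f'
  set f' : ℝ → ℝ := fun x => -(2 * lam') * F x ^ (r / 2) with hf'def
  have hslope : ∀ x ∈ Set.Ico s t, ∀ r' : ℝ, f' x < r' →
      ∃ᶠ z in nhdsWithin x (Set.Ioi x), slope F x z < r' := by
    intro x _ r' hr'
    have hsl : ∀ z, x < z → slope F x z ≤ -(2 * lam') * F z ^ (r / 2) := by
      intro z hz
      have hintge : (z - x) * F z ^ (r / 2) ≤ ∫ σ in x..z, F σ ^ (r / 2) := by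
        have h := intervalIntegral.integral_mono_on (f := fun _ => F z ^ (r / 2))
          (g := fun σ => F σ ^ (r / 2)) (μ := MeasureTheory.volume) hz.le
          intervalIntegrable_const (hPc.intervalIntegrable x z)
          (fun σ hσ => Real.rpow_le_rpow (hFnn z) (hmono σ z hσ.2) (by linarith))
        simpa [smul_eq_mul, mul_comm] using h
      have hFz := hF x z hz.le
      rw [slope_def_field, div_le_iff₀ (by linarith : (0:ℝ) < z - x)]
      nlinarith
    have hcont : Filter.Tendsto (fun z => -(2 * lam') * F z ^ (r / 2))
        (nhdsWithin x (Set.Ioi x)) (nhds (f' x)) :=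
      (((hPc.tendsto x).const_mul _).mono_left nhdsWithin_le_nhds)
    have hev : ∀ᶠ z in nhdsWithin x (Set.Ioi x), -(2 * lam') * F z ^ (r / 2) < r' :=
      hcont.eventually_lt_const hr'
    have hev2 : ∀ᶠ z in nhdsWithin x (Set.Ioi x), slope F x z < r' := by
      filter_upwards [hev, self_mem_nhdsWithin] with z h1 h2
      exact lt_of_le_of_lt (hsl z h2) h1
    exact hev2.frequently
  -- comparison with B for any 0 < c' < c
  have main : ∀ c' : ℝ, 0 < c' → c' < c → F t ≤ (c' * (t - s) + ε) ^ (-m) := by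
    intro c' hc'pos hc'lt
    set g : ℝ → ℝ := fun τ => c' * (τ - s) + ε with hgdef
    have hgpos : ∀ τ, s ≤ τ → 0 < g τ := by
      intro τ hτ
      have h1 : 0 ≤ c' * (τ - s) := by
        have : 0 ≤ τ - s := by linarith
        positivity
      simp only [hgdef]; linarith
    set B : ℝ → ℝ := fun τ => g τ ^ (-m) with hBdef
    have hBpos : ∀ τ, s ≤ τ → 0 < B τ := fun τ hτ => Real.rpow_pos_of_pos (hgpos τ hτ) _
    have hBs : F s ≤ B s := by
      simp only [hBdef, hgdef, sub_self, mul_zero, zero_add, hεs, le_refl]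
    set B' : ℝ → ℝ := fun x => c' * (-m) * g x ^ (-m - 1) with hB'def
    have hgd : ∀ x : ℝ, HasDerivAt g c' x := by
      intro x
      have h1 : HasDerivAt (fun τ : ℝ => c' * (τ - s)) (c' * 1) x :=
        ((hasDerivAt_id x).sub_const s).const_mul c'
      simpa only [mul_one] using h1.add_const ε
    have hBder : ∀ x ∈ Set.Ico s t, HasDerivWithinAt B (B' x) (Set.Ici x) x := by
      intro x hx
      exact (((hgd x).rpow_const (Or.inl (hgpos x hx.1).ne')).hasDerivWithinAt)
    have hBcont : ContinuousOn B (Set.Icc s t) := by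
      apply ContinuousOn.rpow_const
      · exact (((continuous_const.mul (continuous_id.sub continuous_const)).add
          continuous_const).continuousOn)
      · intro x hx
        exact Or.inl (hgpos x hx.1).ne'
    have hbound : ∀ x ∈ Set.Ico s t, F x = B x → f' x < B' x := by
      intro x hx hFB
      have hgx := hgpos x hx.1
      have hFxpos : 0 < F x := hFB ▸ hBpos x hx.1
      have hBpow : B x ^ (r / 2) = g x ^ (-m - 1) := by
        rw [hBdef, ← Real.rpow_mul hgx.le,
          show -m * (r / 2) = -m - 1 by rw [hm]; field_simp; ring]
      have hpowpos : 0 < F x ^ (r / 2) := Real.rpow_pos_of_pos hFxpos _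
      have heq : B' x = -(c' * m) * F x ^ (r / 2) := by
        rw [hB'def, hFB, hBpow]; ring
      rw [heq, hf'def]
      have : c' * m < 2 * lam' := by
        calc c' * m < c * m := by exact mul_lt_mul_of_pos_right hc'lt hmpos
          _ = 2 * lam' := hcm
      nlinarith
    have := image_le_of_liminf_slope_right_lt_deriv_boundary' (f := F) (f' := f')
      (a := s) (b := t) hFc.continuousOn hslope hBs hBcont hBder hbound ⟨hst, le_rfl⟩
    simpa [hBdef, hgdef] using this
  -- take the limit c' → c from the left
  have hlim : F t ≤ (c * (t - s) + ε) ^ (-m) := by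
    have hcontG : ContinuousAt (fun c' : ℝ => (c' * (t - s) + ε) ^ (-m)) c := by
      apply ContinuousAt.rpow_const
      · exact ((continuousAt_id.mul continuousAt_const).add continuousAt_const)
      · left
        have : 0 < c * (t - s) + ε := by positivity
        simpa using this.ne'
    have htend : Filter.Tendsto (fun c' : ℝ => (c' * (t - s) + ε) ^ (-m))
        (nhdsWithin c (Set.Iio c)) (nhds ((c * (t - s) + ε) ^ (-m))) :=
      hcontG.continuousWithinAt
    refine ge_of_tendsto htend ?_
    filter_upwards [Ioo_mem_nhdsLT_of_mem (Set.mem_Ioc.mpr ⟨half_lt_self hcpos, le_rfl⟩)]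
      with c' hc'
    exact main c' (lt_trans (half_pos hcpos) hc'.1) hc'.2
  calc F t ≤ (c * (t - s) + ε) ^ (-m) := hlim
    _ ≤ (c * (t - s)) ^ (-m) := by
        apply Real.rpow_le_rpow_of_nonpos (by positivity) (by linarith) (by linarith)
    _ = (lam' * (r - 2) * (t - s)) ^ (-(2 / (r - 2))) := by rw [hc, hm]
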